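/- Let α ∈ ℝ, n ≥ 1, and let s₁,…,sₙ be pairwise distinct complex numbers with Re(sᵢ) > −α for all i. Then the n×n complex matrix A with entries A_{ij} = 1/(2π(2α + sᵢ + conj(sⱼ))) is Hermitian and positive definite: for every nonzero x ∈ ℂⁿ, the quantity xᴴ A x is a positive real number. -/

import Mathlib

open Matrix ComplexConjugate MeasureTheory Set Filter

private lemma integrableOn_cexp_neg_mul (c : ℂ) (hc : 0 < c.re) :
    IntegrableOn (fun t : ℝ => Complex.exp (-(c * t))) (Ioi 0) := by
  refine (exp_neg_integrableOn_Ioi 0 hc).mono' ?_ ?_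
  · exact (Complex.continuous_exp.comp
      ((continuous_const.mul Complex.continuous_ofReal).neg)).aestronglyMeasurable
  · filter_upwards with t
    rw [Complex.norm_exp]
    simp [Complex.mul_re, neg_mul]

private lemma integral_cexp_neg_mul (c : ℂ) (hc : 0 < c.re) :
    ∫ t in Ioi (0:ℝ), Complex.exp (-(c * t)) = 1 / c := by
  have hc0 : c ≠ 0 := by intro h; rw [h] at hc; simp at hc
  have hderiv : ∀ t ∈ Ioi (0:ℝ),
      HasDerivAt (fun u : ℝ => -Complex.exp (-(c * u)) / c)
        (Complex.exp (-(c * t))) t := by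
    intro t _
    have h1 : HasDerivAt (fun u : ℝ => -(c * (u:ℂ))) (-c) t := by
      have h0 : HasDerivAt (fun u : ℝ => c * (u:ℂ)) c t := by
        simpa using (Complex.ofRealCLM.hasDerivAt (x := t)).const_mul c
      exact h0.neg
    have h2 := (h1.cexp.neg).div_const c
    exact h2.congr_deriv (by rw [mul_neg, neg_neg, mul_div_cancel_right₀ _ hc0])
  have htend : Tendsto (fun t : ℝ => -Complex.exp (-(c * t)) / c) atTop (nhds 0) := by
    rw [tendsto_zero_iff_norm_tendsto_zero]
    have heq : (fun t : ℝ => ‖-Complex.exp (-(c * t)) / c‖)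
        = fun t : ℝ => Real.exp (-c.re * t) / ‖c‖ := by
      funext t
      rw [norm_div, norm_neg, Complex.norm_exp]
      simp [Complex.mul_re, neg_mul]
    rw [heq]
    have h3 : Tendsto (fun t : ℝ => -c.re * t) atTop atBot :=
      tendsto_id.const_mul_atTop_of_neg (by linarith)
    simpa using (Real.tendsto_exp_atBot.comp h3).div_const ‖c‖
  have hcont : ContinuousWithinAt (fun u : ℝ => -Complex.exp (-(c * u)) / c) (Ici 0) 0 := by
    apply Continuous.continuousWithinAt
    exact ((Complex.continuous_exp.comp
      ((continuous_const.mul Complex.continuous_ofReal).neg)).neg).div_const c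
  have h := integral_Ioi_of_hasDerivAt_of_tendsto hcont hderiv
    (integrableOn_cexp_neg_mul c hc) htend
  rw [h]
  simp
  field_simp

/-- **Strict positive definiteness of the Szegö kernel matrix** for the Hardy space
`H²(Γ_α)` on the shifted right half-plane: for pairwise distinct points `s i` with
`Re (s i) > -α`, the matrix `A i j = 1/(2π(2α + s i + conj (s j)))` is Hermitian and
`xᴴ A x` is a positive real number for every nonzero `x`. -/
theorem stmt1 (α : ℝ) (n : ℕ) (hn : 1 ≤ n) (s : Fin n → ℂ)
    (hdist : Function.Injective s) (hre : ∀ i, -α < (s i).re)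
    (A : Matrix (Fin n) (Fin n) ℂ)
    (hA : ∀ i j, A i j = 1 / (2 * (Real.pi : ℂ) * (2 * (α : ℂ) + s i + conj (s j)))) :
    A.IsHermitian ∧
    ∀ x : Fin n → ℂ, x ≠ 0 →
      0 < (star x ⬝ᵥ A.mulVec x).re ∧ (star x ⬝ᵥ A.mulVec x).im = 0 := by
  -- the shifted points `w j = α + s j` with positive real part
  set w : Fin n → ℂ := fun j => (α : ℂ) + s j with hw
  have hwre : ∀ j, 0 < (w j).re := by
    intro j; simp only [hw, Complex.add_re, Complex.ofReal_re]; linarith [hre j]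
  have hdd : ∀ i j, 0 < (w i + conj (w j)).re := by
    intro i j
    rw [Complex.add_re, Complex.conj_re]
    exact add_pos (hwre i) (hwre j)
  have hpi : (0:ℝ) < Real.pi := Real.pi_pos
  constructor
  · -- Hermitian
    ext i j
    rw [conjTranspose_apply, hA, hA, Complex.star_def]
    simp only [map_div₀, _root_.map_one, _root_.map_mul, map_add, Complex.conj_ofReal,
      Complex.conj_conj, map_ofNat]
    ring_nf
  · intro x hx
    -- rewrite entries via the Laplace integral
    have hAij : ∀ i j, A i j = (1 / (2 * (Real.pi:ℂ))) *
        ∫ t in Ioi (0:ℝ), Complex.exp (-((w i + conj (w j)) * t)) := by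
      intro i j
      rw [hA, integral_cexp_neg_mul _ (hdd i j)]
      have : 2 * (α:ℂ) + s i + conj (s j) = w i + conj (w j) := by
        simp only [hw, map_add, Complex.conj_ofReal]; ring
      rw [this, div_mul_div_comm, one_mul]
    set c : Fin n → ℂ := fun j => -(conj (w j)) with hc
    set g : ℝ → ℂ := fun t => ∑ j, x j * Complex.exp (c j * t) with hg
    -- pointwise identity
    have hP : ∀ t : ℝ, (∑ i, ∑ j, (conj (x i) * x j) *
        Complex.exp (-((w i + conj (w j)) * t))) = (Complex.normSq (g t) : ℂ) := by
      intro t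
      have hsplit : ∀ i j, (conj (x i) * x j) * Complex.exp (-((w i + conj (w j)) * t))
          = (conj (x i) * Complex.exp (-(w i * t))) * (x j * Complex.exp (c j * t)) := by
        intro i j
        rw [hc]
        rw [show -((w i + conj (w j)) * (t:ℂ)) = -(w i * t) + (-(conj (w j)) * t) by ring,
          Complex.exp_add]
        ring
      simp_rw [hsplit]
      rw [← Finset.sum_mul_sum]
      have hconj : (∑ i, conj (x i) * Complex.exp (-(w i * (t:ℂ)))) = conj (g t) := by
        rw [hg, map_sum]
        refine Finset.sum_congr rfl fun j _ => ?_
        rw [_root_.map_mul, ← Complex.exp_conj]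
        congr 2
        rw [hc]
        simp [_root_.map_mul, Complex.conj_ofReal]
      rw [hconj, ← Complex.normSq_eq_conj_mul_self]
    -- integrability of each term
    have hTi : ∀ i j : Fin n, IntegrableOn
        (fun t : ℝ => (conj (x i) * x j) * Complex.exp (-((w i + conj (w j)) * t)))
        (Ioi 0) := fun i j => (integrableOn_cexp_neg_mul _ (hdd i j)).const_mul _
    -- the quadratic form as an integral
    have hQ : star x ⬝ᵥ A.mulVec x = (1 / (2 * (Real.pi:ℂ))) *
        ∑ i, ∑ j, (conj (x i) * x j) *
          ∫ t in Ioi (0:ℝ), Complex.exp (-((w i + conj (w j)) * t)) := by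
      simp only [dotProduct, mulVec, Pi.star_apply, RCLike.star_def, hAij]
      rw [Finset.mul_sum]
      refine Finset.sum_congr rfl fun i _ => ?_
      rw [Finset.mul_sum, Finset.mul_sum]
      refine Finset.sum_congr rfl fun j _ => ?_
      ring
    have hswap : (∑ i, ∑ j, (conj (x i) * x j) *
          ∫ t in Ioi (0:ℝ), Complex.exp (-((w i + conj (w j)) * t)))
        = ∫ t in Ioi (0:ℝ), ∑ i, ∑ j, (conj (x i) * x j) *
            Complex.exp (-((w i + conj (w j)) * t)) := by
      rw [integral_finset_sum _ (fun i _ => integrable_finset_sum _ (fun j _ => hTi i j))]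
      refine Finset.sum_congr rfl fun i _ => ?_
      rw [integral_finset_sum _ (fun j _ => hTi i j)]
      refine Finset.sum_congr rfl fun j _ => ?_
      rw [MeasureTheory.integral_const_mul]
    set I : ℝ := ∫ t in Ioi (0:ℝ), Complex.normSq (g t) with hI
    have hIntC : IntegrableOn (fun t : ℝ => (Complex.normSq (g t) : ℂ)) (Ioi 0) := by
      have h1 : IntegrableOn (fun t : ℝ => ∑ i, ∑ j, (conj (x i) * x j) *
          Complex.exp (-((w i + conj (w j)) * t))) (Ioi 0) :=
        integrable_finset_sum _ (fun i _ => integrable_finset_sum _ (fun j _ => hTi i j))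
      exact h1.congr (Filter.Eventually.of_forall hP)
    have hInt : IntegrableOn (fun t : ℝ => Complex.normSq (g t)) (Ioi 0) := by
      have h2 := hIntC.re
      refine h2.congr (Filter.Eventually.of_forall fun t => ?_)
      simp
    have hcoe : (∫ t in Ioi (0:ℝ), (Complex.normSq (g t) : ℂ)) = ((I : ℝ) : ℂ) := by
      rw [hI]
      simp only [← Complex.ofRealCLM_apply]
      exact ContinuousLinearMap.integral_comp_comm Complex.ofRealCLM hInt
    have hkey : star x ⬝ᵥ A.mulVec x = ((1 / (2 * Real.pi) * I : ℝ) : ℂ) := by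
      rw [hQ, hswap]
      simp_rw [hP]
      rw [hcoe]
      push_cast
      ring
    have hInonneg : 0 ≤ I := integral_nonneg fun t => Complex.normSq_nonneg _
    -- strict positivity
    have hIne : I ≠ 0 := by
      intro hI0
      have hae : (fun t : ℝ => Complex.normSq (g t)) =ᵐ[volume.restrict (Ioi 0)] 0 :=
        (integral_eq_zero_iff_of_nonneg (fun t => Complex.normSq_nonneg _) hInt).mp hI0
      -- deduce g = 0 on Ioi 0
      have hg0 : ∀ t ∈ Ioi (0:ℝ), g t = 0 := by
        by_contra hcontra
        push_neg at hcontra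
        obtain ⟨t0, ht0, hgt0⟩ := hcontra
        have hgc : Continuous g := by
          apply continuous_finset_sum
          intro j _
          exact continuous_const.mul (Complex.continuous_exp.comp
            (continuous_const.mul Complex.continuous_ofReal))
        set U : Set ℝ := {t | g t ≠ 0} ∩ Ioi 0 with hU
        have hUopen : IsOpen U :=
          (isOpen_ne_fun hgc continuous_const).inter isOpen_Ioi
        have hUne : U.Nonempty := ⟨t0, hgt0, ht0⟩
        have hUpos : 0 < volume U := hUopen.measure_pos volume hUne
        have hnull : volume.restrict (Ioi 0) {t | g t ≠ 0} = 0 := by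
          have := hae
          rw [Filter.EventuallyEq, ae_iff] at this
          convert this using 2
          ext t
          simp [Complex.normSq_eq_zero]
        rw [Measure.restrict_apply₀' (measurableSet_Ioi).nullMeasurableSet] at hnull
        rw [hU] at hUpos
        exact absurd hnull (by exact hUpos.ne')
      -- linear independence of exponentials via Vandermonde
      have hcinj : Function.Injective c := by
        intro a b hab
        rw [hc] at hab
        have h1 : conj (w a) = conj (w b) := neg_injective hab
        have h2 : w a = w b := (starRingEnd ℂ).injective h1
        have h3 : s a = s b := by
          have := h2; rw [hw] at this; simpa using this
        exact hdist h3
      have hder : ∀ (k : ℕ), ∀ t ∈ Ioi (0:ℝ),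
          (∑ j, x j * c j ^ k * Complex.exp (c j * t)) = 0 := by
        intro k
        induction k with
        | zero => intro t ht; simpa [hg] using hg0 t ht
        | succ k ih =>
          intro t ht
          set F : ℝ → ℂ := fun u => ∑ j, x j * c j ^ k * Complex.exp (c j * u) with hF
          have hF0 : F =ᶠ[nhds t] fun _ => 0 := by
            filter_upwards [isOpen_Ioi.mem_nhds ht] with u hu
            exact ih u hu
          have hFd : HasDerivAt F (∑ j, x j * c j ^ (k+1) * Complex.exp (c j * t)) t := by
            apply HasDerivAt.fun_sum
            intro j _
            have h1 : HasDerivAt (fun u : ℝ => c j * (u:ℂ)) (c j) t := by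
              simpa using (Complex.ofRealCLM.hasDerivAt (x := t)).const_mul (c j)
            have h2 := (h1.cexp).const_mul (x j * c j ^ k)
            exact h2.congr_deriv (by ring)
          have : deriv F t = 0 := by
            rw [hF0.deriv_eq]
            simp
          rw [← hFd.deriv, this]
      have hvan := eq_zero_of_forall_pow_sum_mul_pow_eq_zero
        (R := ℂ) (f := c) (v := fun j => x j * Complex.exp (c j)) hcinj
        (fun i => by
          have h1 := hder (i : ℕ) 1 (by norm_num)
          rw [← h1]
          refine Finset.sum_congr rfl fun j _ => ?_
          push_cast
          rw [mul_one]
          ring)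
      apply hx
      funext j
      have := congrFun hvan j
      simp only [Pi.zero_apply, mul_eq_zero] at this
      rcases this with h | h
      · exact h
      · exact absurd h (Complex.exp_ne_zero _)
    have hIpos : 0 < I := lt_of_le_of_ne hInonneg (Ne.symm hIne)
    rw [hkey]
    constructor
    · rw [Complex.ofReal_re]
      positivity
    · rw [Complex.ofReal_im]
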